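/- Let γ be the standard Gaussian measure on X = Fin T → Fin N → EuclideanSpace ℝ (Fin 3) (the finite product over all frames, nodes, and coordinates of gaussianReal 0 1), and for m ∈ X let N(m) := Measure.map (fun z => fun τ i => m τ i + z τ i) γ denote the isotropic Gaussian with mean m and identity covariance. Let C = Fin Tc → Fin N → EuclideanSpace ℝ (Fin 3) and let r : C → X be SE(3)-equivariant: r (g • c) = g • r c for every rigid motion g and every c. Then the conditional prior family c ↦ N(r c) is SE(3)-equivariant: for every rigid motion g and every c, Measure.map (g • ·) (N (r c)) = N (r (g • c)). -/

import Mathlib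

open MeasureTheory ProbabilityTheory Function ENNReal

/-- The action of a rigid motion `(R, t)`: `(g • x) τ i = R.mulVec (x τ i) + t`. -/
noncomputable def rigidAct {T N : ℕ} (R : Matrix (Fin 3) (Fin 3) ℝ)
    (t : EuclideanSpace ℝ (Fin 3))
    (x : Fin T → Fin N → EuclideanSpace ℝ (Fin 3)) :
    Fin T → Fin N → EuclideanSpace ℝ (Fin 3) :=
  fun τ i => (EuclideanSpace.equiv (Fin 3) ℝ).symm (R.mulVec (x τ i)) + t

/-- The standard Gaussian measure on `EuclideanSpace ℝ (Fin 3)`: the product over the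
three coordinates of the real standard Gaussian `gaussianReal 0 1`. -/
noncomputable def stdGaussianE3 : Measure (EuclideanSpace ℝ (Fin 3)) :=
  Measure.map (MeasurableEquiv.toLp 2 (Fin 3 → ℝ))
    (Measure.pi fun _ : Fin 3 => gaussianReal 0 1)

/-- The standard Gaussian measure on the trajectory space
`X = Fin T → Fin N → EuclideanSpace ℝ (Fin 3)`. -/
noncomputable def stdGaussianTraj (T N : ℕ) :
    Measure (Fin T → Fin N → EuclideanSpace ℝ (Fin 3)) :=
  Measure.pi fun _ : Fin T => Measure.pi fun _ : Fin N => stdGaussianE3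

/-- The isotropic Gaussian on the trajectory space with mean `m` and identity
covariance: the standard Gaussian translated by `m`. -/
noncomputable def isoGaussian {T N : ℕ}
    (m : Fin T → Fin N → EuclideanSpace ℝ (Fin 3)) :
    Measure (Fin T → Fin N → EuclideanSpace ℝ (Fin 3)) :=
  Measure.map (fun z => fun τ i => m τ i + z τ i) (stdGaussianTraj T N)

section Aux

lemma lmarginal_prod {ι : Type*} [DecidableEq ι] {α : ι → Type*}
    [∀ i, MeasurableSpace (α i)] (μ : ∀ i, Measure (α i)) [∀ i, SigmaFinite (μ i)]
    (f : ∀ i, α i → ℝ≥0∞) (hf : ∀ i, Measurable (f i)) (s : Finset ι) :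
    (∫⋯∫⁻_s, (fun y => ∏ i ∈ s, f i (y i)) ∂μ) = fun _ => ∏ i ∈ s, ∫⁻ y, f i y ∂μ i := by
  induction s using Finset.induction with
  | empty => simp
  | @insert i s hi ih =>
    have hG : Measurable fun y : ∀ j, α j => ∏ j ∈ s, f j (y j) :=
      Finset.measurable_prod _ fun j _ => (hf j).comp (measurable_pi_apply j)
    have hF : Measurable fun y : ∀ j, α j => ∏ j ∈ insert i s, f j (y j) :=
      Finset.measurable_prod _ fun j _ => (hf j).comp (measurable_pi_apply j)
    have key : ∀ z, (∫⋯∫⁻_s, (fun y => ∏ j ∈ insert i s, f j (y j)) ∂μ) z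
        = f i (z i) * (∫⋯∫⁻_s, (fun y => ∏ j ∈ s, f j (y j)) ∂μ) z := by
      intro z
      simp only [MeasureTheory.lmarginal]
      have h1 : ∀ y : ∀ j : s, α j, ∏ j ∈ insert i s, f j (updateFinset z s y j)
          = f i (z i) * ∏ j ∈ s, f j (updateFinset z s y j) := by
        intro y
        rw [Finset.prod_insert hi]
        congr 2
        simp [Function.updateFinset, hi]
      rw [lintegral_congr h1]
      exact lintegral_const_mul _ (hG.comp measurable_updateFinset)
    ext x
    rw [MeasureTheory.lmarginal_insert _ hF hi]
    simp only [key, ih, Function.update_self]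
    rw [lintegral_mul_const _ (hf i), Finset.prod_insert hi]

lemma lintegral_pi_prod {ι : Type*} [Fintype ι] [DecidableEq ι] {α : ι → Type*}
    [∀ i, MeasurableSpace (α i)] [Nonempty (∀ i, α i)]
    (μ : ∀ i, Measure (α i)) [∀ i, SigmaFinite (μ i)]
    (f : ∀ i, α i → ℝ≥0∞) (hf : ∀ i, Measurable (f i)) :
    ∫⁻ x, ∏ i, f i (x i) ∂Measure.pi μ = ∏ i, ∫⁻ y, f i y ∂μ i := by
  obtain ⟨x⟩ := ‹Nonempty (∀ i, α i)›
  rw [MeasureTheory.lintegral_eq_lmarginal_univ x, lmarginal_prod μ f hf Finset.univ]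

/-- componentwise map of a pi measure -/
lemma pi_map_comp {ι : Type*} [Fintype ι] {α : ι → Type*}
    [∀ i, MeasurableSpace (α i)]
    (μ ν : ∀ i, Measure (α i)) [∀ i, IsProbabilityMeasure (μ i)]
    [∀ i, IsProbabilityMeasure (ν i)]
    (f : ∀ i, α i → α i) (hfm : ∀ i, Measurable (f i))
    (hf : ∀ i, Measure.map (f i) (μ i) = ν i) :
    Measure.map (fun x i => f i (x i)) (Measure.pi μ) = Measure.pi ν := by
  refine (Measure.pi_eq fun s hs => ?_).symm
  have hm : Measurable fun (x : ∀ i, α i) i => f i (x i) :=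
    measurable_pi_lambda _ fun i => (hfm i).comp (measurable_pi_apply i)
  rw [Measure.map_apply hm (MeasurableSet.univ_pi hs)]
  have hpre : (fun (x : ∀ i, α i) i => f i (x i)) ⁻¹' Set.pi Set.univ s
      = Set.pi Set.univ fun i => f i ⁻¹' s i := by
    ext x; simp [Set.mem_pi]
  rw [hpre, Measure.pi_pi]
  exact Finset.prod_congr rfl fun i _ => by
    rw [← hf i, Measure.map_apply (hfm i) (hs i)]

lemma map_withDensity_equiv {α β : Type*} [MeasurableSpace α] [MeasurableSpace β]
    (e : α ≃ᵐ β) (μ : Measure α) (g : β → ℝ≥0∞) (hg : Measurable g) :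
    Measure.map e (μ.withDensity fun a => g (e a)) = (Measure.map e μ).withDensity g := by
  ext s hs
  rw [Measure.map_apply e.measurable hs, withDensity_apply _ (e.measurable hs),
    withDensity_apply _ hs, Measure.restrict_map e.measurable hs,
    lintegral_map hg e.measurable]

lemma pi_gaussian_eq : (Measure.pi fun _ : Fin 3 => gaussianReal 0 1)
    = (volume : Measure (Fin 3 → ℝ)).withDensity fun x => ∏ i, gaussianPDF 0 1 (x i) := by
  refine Measure.pi_eq fun s hs => ?_
  rw [withDensity_apply _ (MeasurableSet.univ_pi hs),
    ← lintegral_indicator (MeasurableSet.univ_pi hs) _]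
  have hind : (Set.univ.pi s).indicator (fun x : Fin 3 → ℝ => ∏ i, gaussianPDF 0 1 (x i))
      = fun x => ∏ i, (s i).indicator (gaussianPDF 0 1) (x i) := by
    ext x
    by_cases h : x ∈ Set.univ.pi s
    · have hx : ∀ i, x i ∈ s i := fun i => h i (Set.mem_univ i)
      rw [Set.indicator_of_mem h]
      exact Finset.prod_congr rfl fun i _ => (Set.indicator_of_mem (hx i) _).symm
    · rw [Set.indicator_of_notMem h]
      obtain ⟨i, hi⟩ : ∃ i, x i ∉ s i := by simpa [Set.mem_pi] using h
      exact (Finset.prod_eq_zero (Finset.mem_univ i) (Set.indicator_of_notMem hi _)).symm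
  rw [hind, MeasureTheory.volume_pi, lintegral_pi_prod _ _
    (fun i => (measurable_gaussianPDF 0 1).indicator (hs i))]
  refine Finset.prod_congr rfl fun i _ => ?_
  rw [lintegral_indicator (hs i) _, gaussianReal_of_var_ne_zero 0 one_ne_zero,
    withDensity_apply _ (hs i)]

lemma sq_sum_mulVec {R : Matrix (Fin 3) (Fin 3) ℝ} (hR : star R * R = 1) (v : Fin 3 → ℝ) :
    dotProduct (R.mulVec v) (R.mulVec v) = dotProduct v v := by
  rw [Matrix.dotProduct_mulVec, Matrix.vecMul_mulVec,
    ← Matrix.conjTranspose_eq_transpose_of_trivial, ← Matrix.star_eq_conjTranspose, hR,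
    Matrix.vecMul_one]

/-- The rotation by an orthogonal matrix as a linear isometry equivalence. -/
noncomputable def rotIso (R : Matrix (Fin 3) (Fin 3) ℝ)
    (hR : R ∈ Matrix.orthogonalGroup (Fin 3) ℝ) :
    EuclideanSpace ℝ (Fin 3) ≃ₗᵢ[ℝ] EuclideanSpace ℝ (Fin 3) where
  toLinearEquiv :=
    { toFun := fun v => (EuclideanSpace.equiv (Fin 3) ℝ).symm
        (R.mulVec (EuclideanSpace.equiv (Fin 3) ℝ v))
      invFun := fun v => (EuclideanSpace.equiv (Fin 3) ℝ).symm
        ((star R).mulVec (EuclideanSpace.equiv (Fin 3) ℝ v))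
      map_add' := fun v w => by simp [Matrix.mulVec_add]
      map_smul' := fun c v => by simp [Matrix.mulVec_smul]
      left_inv := fun v => by
        simp [Matrix.mulVec_mulVec, (Matrix.mem_orthogonalGroup_iff' _ _).mp hR,
          Matrix.one_mulVec, PiLp.coe_continuousLinearEquiv, Matrix.star_eq_conjTranspose,
          Matrix.conjTranspose_eq_transpose_of_trivial]
      right_inv := fun v => by
        simp [Matrix.mulVec_mulVec, (Matrix.mem_orthogonalGroup_iff _ _).mp hR,
          Matrix.one_mulVec, PiLp.coe_continuousLinearEquiv, Matrix.star_eq_conjTranspose,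
          Matrix.conjTranspose_eq_transpose_of_trivial] }
  norm_map' := fun v => by
    rw [EuclideanSpace.norm_eq, EuclideanSpace.norm_eq]
    congr 1
    have h := sq_sum_mulVec ((Matrix.mem_orthogonalGroup_iff' _ _).mp hR)
      (EuclideanSpace.equiv (Fin 3) ℝ v)
    simp only [dotProduct] at h
    simp only [LinearEquiv.coe_mk, Equiv.coe_fn_mk, Real.norm_eq_abs, pow_two,
      abs_mul_abs_self]
    convert h using 2 <;> rfl

/-- The density of the standard Gaussian on `EuclideanSpace ℝ (Fin 3)`. -/
noncomputable def gdens (x : EuclideanSpace ℝ (Fin 3)) : ℝ≥0∞ :=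
  ∏ i, gaussianPDF 0 1 (x i)

lemma gdens_measurable : Measurable gdens :=
  Finset.measurable_prod _ fun i _ => (measurable_gaussianPDF 0 1).comp
    ((measurable_pi_apply i).comp (MeasurableEquiv.toLp 2 (Fin 3 → ℝ)).symm.measurable)

lemma gdens_eq (x : EuclideanSpace ℝ (Fin 3)) :
    gdens x = ENNReal.ofReal
      ((Real.sqrt (2 * Real.pi))⁻¹ ^ 3 * Real.exp (-(∑ i, x i ^ 2) / 2)) := by
  rw [gdens]
  have h1 : ∀ i : Fin 3, gaussianPDF 0 1 (x i)
      = ENNReal.ofReal ((Real.sqrt (2 * Real.pi))⁻¹ * Real.exp (-(x i ^ 2) / 2)) := by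
    intro i
    rw [gaussianPDF, gaussianPDFReal]
    norm_num
  simp only [h1]
  rw [← ENNReal.ofReal_prod_of_nonneg (fun i _ => by positivity)]
  congr 1
  rw [Finset.prod_mul_distrib, Finset.prod_const, ← Real.exp_sum]
  have h2 : ∑ i : Fin 3, -(x i ^ 2) / 2 = -(∑ i, x i ^ 2) / 2 := by
    rw [← Finset.sum_div, Finset.sum_neg_distrib]
  rw [h2, Finset.card_univ, Fintype.card_fin]

lemma stdGaussianE3' : Measure.map (MeasurableEquiv.toLp 2 (Fin 3 → ℝ))
      (Measure.pi fun _ : Fin 3 => gaussianReal 0 1)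
    = (volume : Measure (EuclideanSpace ℝ (Fin 3))).withDensity gdens := by
  rw [pi_gaussian_eq]
  have hd : (fun a : Fin 3 → ℝ => ∏ i, gaussianPDF 0 1 (a i))
      = fun a => gdens ((MeasurableEquiv.toLp 2 (Fin 3 → ℝ)) a) := rfl
  rw [hd, map_withDensity_equiv _ volume gdens gdens_measurable,
    MeasurableEquiv.coe_toLp, (PiLp.volume_preserving_toLp (ι := Fin 3)).map_eq]

lemma gdens_rot {R : Matrix (Fin 3) (Fin 3) ℝ} (hR : R ∈ Matrix.orthogonalGroup (Fin 3) ℝ)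
    (v : EuclideanSpace ℝ (Fin 3)) : gdens (rotIso R hR v) = gdens v := by
  have h := sq_sum_mulVec ((Matrix.mem_orthogonalGroup_iff' _ _).mp hR)
    (EuclideanSpace.equiv (Fin 3) ℝ v)
  simp only [dotProduct] at h
  have h1 : ∑ i : Fin 3, (rotIso R hR v) i ^ 2
      = ∑ i, (R.mulVec (EuclideanSpace.equiv (Fin 3) ℝ v)) i
          * (R.mulVec (EuclideanSpace.equiv (Fin 3) ℝ v)) i :=
    Finset.sum_congr rfl fun i _ => by rw [pow_two]; rfl
  have h2 : ∑ i : Fin 3, (EuclideanSpace.equiv (Fin 3) ℝ v) i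
      * (EuclideanSpace.equiv (Fin 3) ℝ v) i = ∑ i, v i ^ 2 :=
    Finset.sum_congr rfl fun i _ => by rw [pow_two]; rfl
  have hsum : ∑ i : Fin 3, (rotIso R hR v) i ^ 2 = ∑ i, v i ^ 2 := by
    rw [h1, h, h2]
  rw [gdens_eq, gdens_eq, hsum]

end Aux
section Aux2

lemma stdGaussianE3_eq :
    stdGaussianE3 = (volume : Measure (EuclideanSpace ℝ (Fin 3))).withDensity gdens :=
  stdGaussianE3'

instance : IsProbabilityMeasure stdGaussianE3 := by
  rw [stdGaussianE3]
  exact Measure.isProbabilityMeasure_map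
    (MeasurableEquiv.toLp 2 (Fin 3 → ℝ)).measurable.aemeasurable

lemma map_rotIso_stdGaussianE3 {R : Matrix (Fin 3) (Fin 3) ℝ}
    (hR : R ∈ Matrix.orthogonalGroup (Fin 3) ℝ) :
    Measure.map (rotIso R hR) stdGaussianE3 = stdGaussianE3 := by
  rw [stdGaussianE3_eq]
  set e : EuclideanSpace ℝ (Fin 3) ≃ᵐ EuclideanSpace ℝ (Fin 3) :=
    (rotIso R hR).toHomeomorph.toMeasurableEquiv with he
  have hcoe : ⇑e = ⇑(rotIso R hR) := rfl
  have h1 : gdens = fun a => gdens (e a) := funext fun a => (gdens_rot hR a).symm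
  rw [← hcoe]
  calc Measure.map e (volume.withDensity gdens)
      = Measure.map e (volume.withDensity fun a => gdens (e a)) := by rw [← h1]
    _ = (Measure.map e volume).withDensity gdens :=
        map_withDensity_equiv e volume gdens gdens_measurable
    _ = volume.withDensity gdens := by
        rw [hcoe, (rotIso R hR).measurePreserving.map_eq]

set_option maxHeartbeats 1000000 in
lemma map_rotTraj {T N : ℕ} {R : Matrix (Fin 3) (Fin 3) ℝ}
    (hR : R ∈ Matrix.orthogonalGroup (Fin 3) ℝ) :
    Measure.map (fun z : Fin T → Fin N → EuclideanSpace ℝ (Fin 3) =>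
        fun τ i => rotIso R hR (z τ i)) (stdGaussianTraj T N)
      = stdGaussianTraj T N := by
  have hLi : Measurable fun v : EuclideanSpace ℝ (Fin 3) => rotIso R hR v :=
    (rotIso R hR).continuous.measurable
  rw [stdGaussianTraj]
  exact pi_map_comp _ _ (fun τ => fun y i => rotIso R hR (y i))
    (fun τ => measurable_pi_lambda _ fun i => hLi.comp (measurable_pi_apply i))
    (fun τ => pi_map_comp _ _ (fun i => fun v => rotIso R hR v)
      (fun i => hLi) (fun i => map_rotIso_stdGaussianE3 hR))

end Aux2

/-- If the mean function `r : C → X` is SE(3)-equivariant, then the conditional prior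
family `c ↦ N(r c, I)` is SE(3)-equivariant:
`Measure.map (g • ·) (N (r c)) = N (r (g • c))`. -/
theorem stmt11 (T Tc N : ℕ) (hN : 0 < N)
    (r : (Fin Tc → Fin N → EuclideanSpace ℝ (Fin 3)) →
      (Fin T → Fin N → EuclideanSpace ℝ (Fin 3)))
    (hr : ∀ R ∈ Matrix.specialOrthogonalGroup (Fin 3) ℝ,
      ∀ t : EuclideanSpace ℝ (Fin 3), ∀ c,
        r (rigidAct R t c) = rigidAct R t (r c)) :
    ∀ R ∈ Matrix.specialOrthogonalGroup (Fin 3) ℝ,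
      ∀ t : EuclideanSpace ℝ (Fin 3), ∀ c,
        Measure.map (rigidAct R t) (isoGaussian (r c))
          = isoGaussian (r (rigidAct R t c)) := by
  intro R hR t c
  have hRo : R ∈ Matrix.orthogonalGroup (Fin 3) ℝ :=
    (Matrix.mem_specialOrthogonalGroup_iff.mp hR).1
  rw [hr R hR t c]
  set m := r c
  have hLi : Measurable fun v : EuclideanSpace ℝ (Fin 3) => rotIso R hRo v :=
    (rotIso R hRo).continuous.measurable
  have hrig : Measurable (rigidAct R t (T := T) (N := N)) := by
    have hra : (rigidAct R t (T := T) (N := N))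
        = fun x τ i => rotIso R hRo (x τ i) + t := rfl
    rw [hra]
    exact measurable_pi_lambda _ fun τ => measurable_pi_lambda _ fun i =>
      (hLi.comp ((measurable_pi_apply i).comp (measurable_pi_apply τ))).add_const t
  have haddm : ∀ (w : Fin T → Fin N → EuclideanSpace ℝ (Fin 3)),
      Measurable fun z : Fin T → Fin N → EuclideanSpace ℝ (Fin 3) =>
        fun τ i => w τ i + z τ i := fun w =>
    measurable_pi_lambda _ fun τ => measurable_pi_lambda _ fun i =>
      Measurable.add measurable_const
        ((measurable_pi_apply i).comp (measurable_pi_apply τ))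
  have hrot : Measurable fun z : Fin T → Fin N → EuclideanSpace ℝ (Fin 3) =>
      fun τ i => rotIso R hRo (z τ i) :=
    measurable_pi_lambda _ fun τ => measurable_pi_lambda _ fun i =>
      hLi.comp ((measurable_pi_apply i).comp (measurable_pi_apply τ))
  have hfun : (rigidAct R t (T := T) (N := N))
        ∘ (fun z : Fin T → Fin N → EuclideanSpace ℝ (Fin 3) => fun τ i => m τ i + z τ i)
      = (fun z : Fin T → Fin N → EuclideanSpace ℝ (Fin 3) =>
          fun τ i => (rigidAct R t m) τ i + z τ i)
        ∘ (fun z : Fin T → Fin N → EuclideanSpace ℝ (Fin 3) =>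
          fun τ i => rotIso R hRo (z τ i)) := by
    funext z
    funext τ i
    show (EuclideanSpace.equiv (Fin 3) ℝ).symm
        (R.mulVec (EuclideanSpace.equiv (Fin 3) ℝ (m τ i + z τ i))) + t
      = ((EuclideanSpace.equiv (Fin 3) ℝ).symm
          (R.mulVec (EuclideanSpace.equiv (Fin 3) ℝ (m τ i))) + t)
        + (EuclideanSpace.equiv (Fin 3) ℝ).symm
            (R.mulVec (EuclideanSpace.equiv (Fin 3) ℝ (z τ i)))
    rw [map_add, Matrix.mulVec_add, map_add]
    exact add_right_comm _ _ _
  rw [isoGaussian, isoGaussian, Measure.map_map hrig (haddm m), hfun,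
    ← Measure.map_map (haddm (rigidAct R t m)) hrot, map_rotTraj hRo]
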